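/- arXiv:1609.05964 — 5 statements merged into one kernel-verified Lean document; each statement's English description precedes it below -/
import Mathlib

section
/- The point (1, 2/3, 2/3, 2/3, −2) belongs to the closure of 𝔹 ∩ 𝔹′, where 𝔹 is the relative interior (intrinsic interior, within the hyperplane β₁+β₂+β₃+β₄+β₅=1) of the convex hull in ℝ⁵ of the sixteen points B₁,…,B₁₆ listed below, and 𝔹′ is the relative interior of the convex hull of the points B′₁,…,B′₁₆, where B′ⱼ = (b₁,b₃,b₄,b₂,b₅) whenever Bⱼ = (b₁,b₂,b₃,b₄,b₅). -/
/-- The sixteen extremal points `B₁, …, B₁₆`. -/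
def Bpts : Set (Fin 5 → ℝ) :=
  {![1, 1, 1/2, 1/2, -2], ![1, 1/2, 1/2, 1, -2], ![1, 1/2, 1, 1/2, -2],
   ![-2, 1, 1/2, 1/2, 1], ![-2, 1/2, 1, 1/2, 1], ![-2, 1/2, 1/2, 1, 1],
   ![0, -3/2, 1/2, 1, 1], ![1, -3/2, 1/2, 1, 0], ![0, -3/2, 1, 1/2, 1],
   ![1, -3/2, 1, 1/2, 0], ![0, 1/2, -1/2, 1, 0], ![1/2, 0, -1/2, 1, 0],
   ![0, 0, -1/2, 1, 1/2], ![0, 1/2, 1, -1/2, 0], ![1/2, 0, 1, -1/2, 0],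
   ![0, 0, 1, -1/2, 1/2]}

/-- `𝔹`: the relative (intrinsic) interior of the convex hull of `B₁, …, B₁₆`. -/
noncomputable def BSet : Set (Fin 5 → ℝ) :=
  intrinsicInterior ℝ (convexHull ℝ Bpts)

/-- `𝔹′`: the relative (intrinsic) interior of the convex hull of `B′₁, …, B′₁₆`, where
`B′ⱼ = (b₁, b₃, b₄, b₂, b₅)` whenever `Bⱼ = (b₁, b₂, b₃, b₄, b₅)`. -/
noncomputable def BSet' : Set (Fin 5 → ℝ) :=
  intrinsicInterior ℝ
    (convexHull ℝ ((fun v : Fin 5 → ℝ => ![v 0, v 2, v 3, v 1, v 4]) '' Bpts))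

open Set

lemma key {V : Type*} [NormedAddCommGroup V] [NormedSpace ℝ V]
    {s : Set V} (hs : Convex ℝ s) {n : ℕ} {q : Fin (n + 1) → V}
    (hq : AffineIndependent ℝ q) (hqs : ∀ i, q i ∈ s)
    (hspan : ∀ y ∈ s, y ∈ affineSpan ℝ (Set.range q)) {x : V} (hx : x ∈ s) :
    openSegment ℝ (Finset.univ.centroid ℝ q) x ⊆ intrinsicInterior ℝ s := by
  haveI : Nonempty (affineSpan ℝ s) := ⟨⟨x, subset_affineSpan ℝ s hx⟩⟩
  set A := affineSpan ℝ s with hA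
  set φ := (AffineIsometryEquiv.constVSub ℝ (⟨x, subset_affineSpan ℝ s hx⟩ : A)).symm
  set ψ : A.direction →ᵃⁱ[ℝ] V := A.subtypeₐᵢ.comp φ.toAffineIsometry with hψ
  have hψap : ∀ z, ψ z = (φ z : V) := fun z => rfl
  have hmem : ∀ y ∈ s, y ∈ A := fun y hy => subset_affineSpan ℝ s hy
  -- pull back q and x
  set q₀ : Fin (n + 1) → A.direction := fun i => φ.symm ⟨q i, hmem _ (hqs i)⟩ with hq₀
  have hψq : ∀ i, ψ (q₀ i) = q i := by
    intro i; rw [hψap, hq₀]; simp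
  set x₀ : A.direction := φ.symm ⟨x, hmem _ hx⟩ with hx₀
  have hψx : ψ x₀ = x := by rw [hψap, hx₀]; simp
  have hcomp : (ψ.toAffineMap : A.direction →ᵃ[ℝ] V) ∘ q₀ = q := by
    funext i; exact hψq i
  have hq₀i : AffineIndependent ℝ q₀ :=
    AffineIndependent.of_comp ψ.toAffineMap (by rw [hcomp]; exact hq)
  have hinj : Function.Injective ψ := ψ.injective
  -- span of q₀ is top
  have htop : affineSpan ℝ (Set.range q₀) = ⊤ := by
    rw [eq_top_iff]
    intro z _
    have hz : ψ z ∈ A := by rw [hψap]; exact (φ z).2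
    have h1 : ψ z ∈ affineSpan ℝ (Set.range q) := by
      have : A ≤ affineSpan ℝ (Set.range q) := by
        rw [hA, affineSpan_le]; exact fun y hy => hspan y hy
      exact this hz
    have h2 : Set.range q = ψ.toAffineMap '' Set.range q₀ := by
      rw [← hcomp, Set.range_comp]
    rw [h2, ← AffineSubspace.map_span] at h1
    obtain ⟨w, hw, hwz⟩ := h1
    rwa [← hinj hwz]
  -- affine basis
  let b : AffineBasis (Fin (n + 1)) ℝ A.direction := ⟨q₀, hq₀i, htop⟩
  have hcent : Finset.univ.centroid ℝ q₀ ∈ interior (convexHull ℝ (Set.range q₀)) := by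
    have := b.centroid_mem_interior_convexHull
    exact this
  have hpre : Convex ℝ (ψ ⁻¹' s) := hs.affine_preimage ψ.toAffineMap
  have hsub : convexHull ℝ (Set.range q₀) ⊆ ψ ⁻¹' s := by
    apply convexHull_min _ hpre
    rintro _ ⟨i, rfl⟩
    simp only [Set.mem_preimage, hψq]
    exact hqs i
  have hc₀ : Finset.univ.centroid ℝ q₀ ∈ interior (ψ ⁻¹' s) := interior_mono hsub hcent
  have hx₀s : x₀ ∈ closure (ψ ⁻¹' s) := subset_closure (by simp [Set.mem_preimage, hψx, hx])
  have hseg : openSegment ℝ (Finset.univ.centroid ℝ q₀) x₀ ⊆ interior (ψ ⁻¹' s) :=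
    hpre.openSegment_interior_closure_subset_interior hc₀ hx₀s
  -- push forward
  have himg : ψ '' (ψ ⁻¹' s) = s := by
    apply Set.image_preimage_eq_of_subset
    intro y hy
    exact ⟨φ.symm ⟨y, hmem y hy⟩, by rw [hψap]; simp⟩
  have hii : intrinsicInterior ℝ s = ψ '' intrinsicInterior ℝ (ψ ⁻¹' s) := by
    conv_lhs => rw [← himg]
    exact AffineIsometry.image_intrinsicInterior ψ _
  have hw1 : ∑ i ∈ (Finset.univ : Finset (Fin (n + 1))), Finset.centroidWeights ℝ Finset.univ i = 1 :=
    Finset.sum_centroidWeights_eq_one_of_card_ne_zero (s := (Finset.univ : Finset (Fin (n + 1)))) ℝ (by simp)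
  have hψcent : ψ (Finset.univ.centroid ℝ q₀) = Finset.univ.centroid ℝ q := by
    have h := Finset.map_affineCombination (Finset.univ) q₀ (Finset.centroidWeights ℝ Finset.univ) hw1 ψ.toAffineMap
    rw [hcomp] at h
    simp only [AffineIsometry.coe_toAffineMap] at h
    rw [Finset.centroid_def, Finset.centroid_def]
    exact h
  intro z hz
  rw [hii]
  have himgseg := image_openSegment ℝ ψ.toAffineMap (Finset.univ.centroid ℝ q₀) x₀
  simp only [AffineIsometry.coe_toAffineMap] at himgseg
  rw [← hψcent, ← hψx, ← himgseg] at hz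
  obtain ⟨w, hw, rfl⟩ := hz
  exact ⟨w, interior_subset_intrinsicInterior (hseg hw), rfl⟩


/-- simplex vertices: `qv i = (1/4) • eᵢ + (3/4) • (0,1/3,1/3,1/3,0)` -/
noncomputable def qv : Fin 5 → Fin 5 → ℝ := fun i k =>
  (if k = i then 1/4 else 0) + (if k = 0 ∨ k = 4 then 0 else 1/4)

lemma hB1 : ![(1:ℝ), 1, 1/2, 1/2, -2] ∈ Bpts := by simp [Bpts]
lemma hB2 : ![(1:ℝ), 1/2, 1/2, 1, -2] ∈ Bpts := by simp [Bpts]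
lemma hB3 : ![(1:ℝ), 1/2, 1, 1/2, -2] ∈ Bpts := by simp [Bpts]
lemma hB4 : ![(-2:ℝ), 1, 1/2, 1/2, 1] ∈ Bpts := by simp [Bpts]
lemma hB7 : ![(0:ℝ), -3/2, 1/2, 1, 1] ∈ Bpts := by simp [Bpts]
lemma hB9 : ![(0:ℝ), -3/2, 1, 1/2, 1] ∈ Bpts := by simp [Bpts]
lemma hB11 : ![(0:ℝ), 1/2, -1/2, 1, 0] ∈ Bpts := by simp [Bpts]
lemma hB12 : ![(1/2:ℝ), 0, -1/2, 1, 0] ∈ Bpts := by simp [Bpts]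
lemma hB13 : ![(0:ℝ), 0, -1/2, 1, 1/2] ∈ Bpts := by simp [Bpts]
lemma hB14 : ![(0:ℝ), 1/2, 1, -1/2, 0] ∈ Bpts := by simp [Bpts]

lemma qv_indep : AffineIndependent ℝ qv := by
  rw [affineIndependent_iff]
  intro s w hw0 hsum e he
  classical
  set W : Fin 5 → ℝ := fun i => if i ∈ s then w i else 0 with hW
  have h0 : ∑ i, W i = 0 := by
    rw [hW]
    rw [Finset.sum_ite_mem, Finset.univ_inter]
    exact hw0
  have h1 : ∑ i, W i • qv i = 0 := by
    rw [hW]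
    simp only [ite_smul, zero_smul]
    rw [Finset.sum_ite_mem, Finset.univ_inter]
    exact hsum
  have hcoord : ∀ k : Fin 5, ∑ i, W i * qv i k = 0 := by
    intro k
    have := congr_fun h1 k
    simpa [Finset.sum_apply] using this
  have e0 := hcoord 0
  have e1 := hcoord 1
  have e2 := hcoord 2
  have e3 := hcoord 3
  have e4 := hcoord 4
  rw [Fin.sum_univ_five] at e0 e1 e2 e3 e4 h0
  simp [qv] at e0 e1 e2 e3 e4
  have h00 : W 0 = 0 := by linarith
  have h44 : W 4 = 0 := by linarith
  have h11 : W 1 = 0 := by linarith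
  have h22 : W 2 = 0 := by linarith
  have h33 : W 3 = 0 := by linarith
  have hz : ∀ i, W i = 0 := by
    intro i
    fin_cases i
    · exact h00
    · exact h11
    · exact h22
    · exact h33
    · exact h44
  have he0 := hz e
  rw [hW] at he0
  simpa [he] using he0

def Hs : Set (Fin 5 → ℝ) := {y | y 0 + y 1 + y 2 + y 3 + y 4 = 1}

lemma convex_Hs : Convex ℝ Hs := by
  intro u hu v hv a b _ _ hab
  simp only [Hs, Set.mem_setOf_eq] at hu hv ⊢
  simp only [Pi.add_apply, Pi.smul_apply, smul_eq_mul]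
  linear_combination a * hu + b * hv + hab

lemma Bpts_sub_Hs : Bpts ⊆ Hs := by
  intro v hv
  simp only [Bpts, Set.mem_insert_iff, Set.mem_singleton_iff] at hv
  rcases hv with rfl|rfl|rfl|rfl|rfl|rfl|rfl|rfl|rfl|rfl|rfl|rfl|rfl|rfl|rfl|rfl <;>
    · simp [Hs]; norm_num

lemma sBpts_sub_Hs :
    (fun v : Fin 5 → ℝ => ![v 0, v 2, v 3, v 1, v 4]) '' Bpts ⊆ Hs := by
  rintro y ⟨v, hv, rfl⟩
  have h := Bpts_sub_Hs hv
  simp only [Hs, Set.mem_setOf_eq] at h ⊢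
  simp
  linarith

lemma mem_span_qv {y : Fin 5 → ℝ} (hy : y ∈ Hs) : y ∈ affineSpan ℝ (Set.range qv) := by
  have hy' : y 0 + y 1 + y 2 + y 3 + y 4 = 1 := hy
  set w : Fin 5 → ℝ := ![4 * y 0, 4 * y 1 - 1, 4 * y 2 - 1, 4 * y 3 - 1, 4 * y 4] with hw
  have hw1 : ∑ i ∈ Finset.univ, w i = 1 := by
    rw [hw, Fin.sum_univ_five]
    simp
    linarith
  have hmem := affineCombination_mem_affineSpan (k := ℝ) (s := Finset.univ) hw1 qv
  have heq : Finset.univ.affineCombination ℝ qv w = ∑ i, w i • qv i :=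
    Finset.univ.affineCombination_eq_linear_combination qv w hw1
  have hsum : ∑ i, w i • qv i = y := by
    funext k
    have hap : (∑ i, w i • qv i) k = ∑ i, w i * qv i k := by
      simp [Finset.sum_apply]
    rw [hap, Fin.sum_univ_five]
    fin_cases k <;> simp [qv, hw] <;> linarith
  rwa [heq, hsum] at hmem

lemma hull_mem {m : ℕ} {P : Set (Fin 5 → ℝ)} {z : Fin m → Fin 5 → ℝ} {w : Fin m → ℝ}
    (hz : ∀ j, z j ∈ P) (hw : ∀ j, 0 ≤ w j) (hw1 : ∑ j, w j = 1)
    {y : Fin 5 → ℝ} (hy : ∑ j, w j • z j = y) : y ∈ convexHull ℝ P := by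
  subst hy
  rw [← Finset.centerMass_eq_of_sum_1 _ _ hw1]
  exact Finset.centerMass_mem_convexHull _ (fun i _ => hw i) (by rw [hw1]; norm_num)
    (fun i _ => hz i)

lemma hqA : ∀ i, qv i ∈ convexHull ℝ Bpts := by
  intro i
  fin_cases i
  · exact hull_mem (z := ![![1/2, 0, -1/2, 1, 0], ![0, 1/2, 1, -1/2, 0]]) (w := ![1/2, 1/2])
      (by intro j; fin_cases j; exacts [hB12, hB14]) (by intro j; fin_cases j <;> norm_num)
      (by norm_num [Fin.sum_univ_two])
      (by funext k; simp [Finset.sum_apply, Fin.sum_univ_two]; fin_cases k <;> simp [qv] <;> norm_num)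
  · exact hull_mem (z := ![![0, 1/2, -1/2, 1, 0], ![0, 1/2, 1, -1/2, 0]]) (w := ![1/2, 1/2])
      (by intro j; fin_cases j; exacts [hB11, hB14]) (by intro j; fin_cases j <;> norm_num)
      (by norm_num [Fin.sum_univ_two])
      (by funext k; simp [Finset.sum_apply, Fin.sum_univ_two]; fin_cases k <;> simp [qv] <;> norm_num)
  · exact hull_mem (z := ![![1, 1, 1/2, 1/2, -2], ![-2, 1, 1/2, 1/2, 1], ![0, -3/2, 1/2, 1, 1],
        ![0, 1/2, -1/2, 1, 0], ![0, 1/2, 1, -1/2, 0]]) (w := ![1/9, 1/18, 1/6, 2/9, 4/9])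
      (by intro j; fin_cases j; exacts [hB1, hB4, hB7, hB11, hB14])
      (by intro j; fin_cases j <;> norm_num)
      (by norm_num [Fin.sum_univ_five, Matrix.cons_val_two, Matrix.cons_val_three, Matrix.cons_val_four])
      (by funext k; simp [Finset.sum_apply, Fin.sum_univ_five]; fin_cases k <;> simp [qv] <;> norm_num)
  · exact hull_mem (z := ![![1, 1, 1/2, 1/2, -2], ![-2, 1, 1/2, 1/2, 1], ![0, -3/2, 1, 1/2, 1],
        ![1/2, 0, -1/2, 1, 0], ![0, 1/2, 1, -1/2, 0]]) (w := ![2/15, 1/6, 1/10, 2/5, 1/5])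
      (by intro j; fin_cases j; exacts [hB1, hB4, hB9, hB12, hB14])
      (by intro j; fin_cases j <;> norm_num)
      (by norm_num [Fin.sum_univ_five, Matrix.cons_val_two, Matrix.cons_val_three, Matrix.cons_val_four])
      (by funext k; simp [Finset.sum_apply, Fin.sum_univ_five]; fin_cases k <;> simp [qv] <;> norm_num)
  · exact hull_mem (z := ![![0, 0, -1/2, 1, 1/2], ![0, 1/2, 1, -1/2, 0]]) (w := ![1/2, 1/2])
      (by intro j; fin_cases j; exacts [hB13, hB14]) (by intro j; fin_cases j <;> norm_num)
      (by norm_num [Fin.sum_univ_two])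
      (by funext k; simp [Finset.sum_apply, Fin.sum_univ_two]; fin_cases k <;> simp [qv] <;> norm_num)

lemma hsB1 : ![(1:ℝ), 1/2, 1/2, 1, -2] ∈ (fun v : Fin 5 → ℝ => ![v 0, v 2, v 3, v 1, v 4]) '' Bpts :=
  ⟨![(1:ℝ), 1, 1/2, 1/2, -2], hB1, by funext k; fin_cases k <;> simp⟩
lemma hsB2 : ![(1:ℝ), 1/2, 1, 1/2, -2] ∈ (fun v : Fin 5 → ℝ => ![v 0, v 2, v 3, v 1, v 4]) '' Bpts :=
  ⟨![(1:ℝ), 1/2, 1/2, 1, -2], hB2, by funext k; fin_cases k <;> simp⟩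
lemma hsB3 : ![(1:ℝ), 1, 1/2, 1/2, -2] ∈ (fun v : Fin 5 → ℝ => ![v 0, v 2, v 3, v 1, v 4]) '' Bpts :=
  ⟨![(1:ℝ), 1/2, 1, 1/2, -2], hB3, by funext k; fin_cases k <;> simp⟩
lemma hsB4 : ![(-2:ℝ), 1/2, 1/2, 1, 1] ∈ (fun v : Fin 5 → ℝ => ![v 0, v 2, v 3, v 1, v 4]) '' Bpts :=
  ⟨![(-2:ℝ), 1, 1/2, 1/2, 1], hB4, by funext k; fin_cases k <;> simp⟩
lemma hsB7 : ![(0:ℝ), 1/2, 1, -3/2, 1] ∈ (fun v : Fin 5 → ℝ => ![v 0, v 2, v 3, v 1, v 4]) '' Bpts :=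
  ⟨![(0:ℝ), -3/2, 1/2, 1, 1], hB7, by funext k; fin_cases k <;> simp⟩
lemma hsB9 : ![(0:ℝ), 1, 1/2, -3/2, 1] ∈ (fun v : Fin 5 → ℝ => ![v 0, v 2, v 3, v 1, v 4]) '' Bpts :=
  ⟨![(0:ℝ), -3/2, 1, 1/2, 1], hB9, by funext k; fin_cases k <;> simp⟩
lemma hsB11 : ![(0:ℝ), -1/2, 1, 1/2, 0] ∈ (fun v : Fin 5 → ℝ => ![v 0, v 2, v 3, v 1, v 4]) '' Bpts :=
  ⟨![(0:ℝ), 1/2, -1/2, 1, 0], hB11, by funext k; fin_cases k <;> simp⟩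
lemma hsB12 : ![(1/2:ℝ), -1/2, 1, 0, 0] ∈ (fun v : Fin 5 → ℝ => ![v 0, v 2, v 3, v 1, v 4]) '' Bpts :=
  ⟨![(1/2:ℝ), 0, -1/2, 1, 0], hB12, by funext k; fin_cases k <;> simp⟩
lemma hsB13 : ![(0:ℝ), -1/2, 1, 0, 1/2] ∈ (fun v : Fin 5 → ℝ => ![v 0, v 2, v 3, v 1, v 4]) '' Bpts :=
  ⟨![(0:ℝ), 0, -1/2, 1, 1/2], hB13, by funext k; fin_cases k <;> simp⟩
lemma hsB14 : ![(0:ℝ), 1, -1/2, 1/2, 0] ∈ (fun v : Fin 5 → ℝ => ![v 0, v 2, v 3, v 1, v 4]) '' Bpts :=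
  ⟨![(0:ℝ), 1/2, 1, -1/2, 0], hB14, by funext k; fin_cases k <;> simp⟩

lemma hqB : ∀ i, qv i ∈ convexHull ℝ ((fun v : Fin 5 → ℝ => ![v 0, v 2, v 3, v 1, v 4]) '' Bpts) := by
  intro i
  fin_cases i
  · exact hull_mem (z := ![![1/2, -1/2, 1, 0, 0], ![0, 1, -1/2, 1/2, 0]]) (w := ![1/2, 1/2])
      (by intro j; fin_cases j; exacts [hsB12, hsB14]) (by intro j; fin_cases j <;> norm_num)
      (by norm_num [Fin.sum_univ_two])
      (by funext k; simp [Finset.sum_apply, Fin.sum_univ_two]; fin_cases k <;> simp [qv] <;> norm_num)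
  · exact hull_mem (z := ![![1, 1/2, 1/2, 1, -2], ![-2, 1/2, 1/2, 1, 1], ![0, 1/2, 1, -3/2, 1],
        ![0, -1/2, 1, 1/2, 0], ![0, 1, -1/2, 1/2, 0]]) (w := ![1/9, 1/18, 1/6, 2/9, 4/9])
      (by intro j; fin_cases j; exacts [hsB1, hsB4, hsB7, hsB11, hsB14])
      (by intro j; fin_cases j <;> norm_num)
      (by norm_num [Fin.sum_univ_five, Matrix.cons_val_two, Matrix.cons_val_three, Matrix.cons_val_four])
      (by funext k; simp [Finset.sum_apply, Fin.sum_univ_five]; fin_cases k <;> simp [qv] <;> norm_num)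
  · exact hull_mem (z := ![![1, 1/2, 1/2, 1, -2], ![-2, 1/2, 1/2, 1, 1], ![0, 1, 1/2, -3/2, 1],
        ![1/2, -1/2, 1, 0, 0], ![0, 1, -1/2, 1/2, 0]]) (w := ![2/15, 1/6, 1/10, 2/5, 1/5])
      (by intro j; fin_cases j; exacts [hsB1, hsB4, hsB9, hsB12, hsB14])
      (by intro j; fin_cases j <;> norm_num)
      (by norm_num [Fin.sum_univ_five, Matrix.cons_val_two, Matrix.cons_val_three, Matrix.cons_val_four])
      (by funext k; simp [Finset.sum_apply, Fin.sum_univ_five]; fin_cases k <;> simp [qv] <;> norm_num)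
  · exact hull_mem (z := ![![0, -1/2, 1, 1/2, 0], ![0, 1, -1/2, 1/2, 0]]) (w := ![1/2, 1/2])
      (by intro j; fin_cases j; exacts [hsB11, hsB14]) (by intro j; fin_cases j <;> norm_num)
      (by norm_num [Fin.sum_univ_two])
      (by funext k; simp [Finset.sum_apply, Fin.sum_univ_two]; fin_cases k <;> simp [qv] <;> norm_num)
  · exact hull_mem (z := ![![0, -1/2, 1, 0, 1/2], ![0, 1, -1/2, 1/2, 0]]) (w := ![1/2, 1/2])
      (by intro j; fin_cases j; exacts [hsB13, hsB14]) (by intro j; fin_cases j <;> norm_num)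
      (by norm_num [Fin.sum_univ_two])
      (by funext k; simp [Finset.sum_apply, Fin.sum_univ_two]; fin_cases k <;> simp [qv] <;> norm_num)

/-- The point `(1, 2/3, 2/3, 2/3, −2)` belongs to the closure of `𝔹 ∩ 𝔹′`. -/
theorem point_mem_closure_B_inter_B' :
    ![(1 : ℝ), 2/3, 2/3, 2/3, -2] ∈ closure (BSet ∩ BSet') := by
  have hxA : ![(1:ℝ), 2/3, 2/3, 2/3, -2] ∈ convexHull ℝ Bpts :=
    hull_mem (z := ![![1, 1, 1/2, 1/2, -2], ![1, 1/2, 1/2, 1, -2], ![1, 1/2, 1, 1/2, -2]])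
      (w := ![1/3, 1/3, 1/3])
      (by intro j; fin_cases j; exacts [hB1, hB2, hB3]) (by intro j; fin_cases j <;> norm_num)
      (by norm_num [Fin.sum_univ_three, Matrix.cons_val_two])
      (by funext k; simp [Finset.sum_apply, Fin.sum_univ_three]; fin_cases k <;> norm_num)
  have hxB : ![(1:ℝ), 2/3, 2/3, 2/3, -2] ∈
      convexHull ℝ ((fun v : Fin 5 → ℝ => ![v 0, v 2, v 3, v 1, v 4]) '' Bpts) :=
    hull_mem (z := ![![1, 1/2, 1/2, 1, -2], ![1, 1/2, 1, 1/2, -2], ![1, 1, 1/2, 1/2, -2]])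
      (w := ![1/3, 1/3, 1/3])
      (by intro j; fin_cases j; exacts [hsB1, hsB2, hsB3]) (by intro j; fin_cases j <;> norm_num)
      (by norm_num [Fin.sum_univ_three, Matrix.cons_val_two])
      (by funext k; simp [Finset.sum_apply, Fin.sum_univ_three]; fin_cases k <;> norm_num)
  have h1 : openSegment ℝ (Finset.univ.centroid ℝ qv) ![(1:ℝ), 2/3, 2/3, 2/3, -2] ⊆ BSet :=
    key (n := 4) (convex_convexHull ℝ Bpts) qv_indep hqA
      (fun y hy => mem_span_qv (convexHull_min Bpts_sub_Hs convex_Hs hy)) hxA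
  have h2 : openSegment ℝ (Finset.univ.centroid ℝ qv) ![(1:ℝ), 2/3, 2/3, 2/3, -2] ⊆ BSet' :=
    key (n := 4) (convex_convexHull ℝ _) qv_indep hqB
      (fun y hy => mem_span_qv (convexHull_min sBpts_sub_Hs convex_Hs hy)) hxB
  have hsub := Set.subset_inter h1 h2
  have hxcl : ![(1:ℝ), 2/3, 2/3, 2/3, -2] ∈
      closure (openSegment ℝ (Finset.univ.centroid ℝ qv) ![(1:ℝ), 2/3, 2/3, 2/3, -2]) := by
    rw [closure_openSegment]
    exact right_mem_segment ℝ _ _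
  exact closure_mono hsub hxcl
end

section
/- For all Schwartz functions f₁,f₂,f₃ on ℝ and every x ∈ ℝ, ∫_{{ξ₁<ξ₂<−ξ₃/2}} f̂₁(ξ₁)f̂₂(ξ₂)f̂₃(ξ₃) e^{2πix(ξ₁+ξ₂+ξ₃)} dξ = ∫_{{ξ₁<ξ₂}} f̂₁(ξ₁)f̂₂(ξ₂)f̂₃(ξ₃) e^{2πix(ξ₁+ξ₂+ξ₃)} dξ − ∫_{{ξ₁<ξ₂} ∩ {ξ₁+ξ₂+ξ₃>0}} f̂₁(ξ₁)f̂₂(ξ₂)f̂₃(ξ₃) e^{2πix(ξ₁+ξ₂+ξ₃)} dξ − ∫_{{ξ₁+ξ₂+ξ₃≤0} ∩ {−ξ₃≤2ξ₂}} f̂₁(ξ₁)f̂₂(ξ₂)f̂₃(ξ₃) e^{2πix(ξ₁+ξ₂+ξ₃)} dξ, all integrals taken over the indicated regions of ℝ³ with respect to Lebesgue measure. -/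
open MeasureTheory

lemma C112_null_diag : (volume : Measure (ℝ × ℝ × ℝ)) {p : ℝ × ℝ × ℝ | p.1 = p.2.1} = 0 := by
  have hS : MeasurableSet {p : ℝ × ℝ × ℝ | p.1 = p.2.1} :=
    measurableSet_eq_fun measurable_fst (measurable_fst.comp measurable_snd)
  rw [Measure.volume_eq_prod, Measure.prod_apply hS]
  have h : ∀ a : ℝ, (volume : Measure (ℝ × ℝ)) {y : ℝ × ℝ | a = y.1} = 0 := by
    intro a
    have he : {y : ℝ × ℝ | a = y.1} = ({a} : Set ℝ) ×ˢ (Set.univ : Set ℝ) := by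
      ext y; simp [Prod.ext_iff, eq_comm]
    rw [he, Measure.volume_eq_prod, Measure.prod_prod]
    simp
  have : ∀ a : ℝ, Prod.mk a ⁻¹' {p : ℝ × ℝ × ℝ | p.1 = p.2.1} = {y : ℝ × ℝ | a = y.1} := fun a => rfl
  simp [this, h]

lemma C112_aux (F : ℝ × ℝ × ℝ → ℂ) (hF : Integrable F) :
    (∫ ξ in {p : ℝ × ℝ × ℝ | p.1 < p.2.1 ∧ p.2.1 < -p.2.2 / 2}, F ξ) =
      (∫ ξ in {p : ℝ × ℝ × ℝ | p.1 < p.2.1}, F ξ) -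
      (∫ ξ in {p : ℝ × ℝ × ℝ | p.1 < p.2.1} ∩
          {p : ℝ × ℝ × ℝ | p.1 + p.2.1 + p.2.2 > 0}, F ξ) -
      (∫ ξ in {p : ℝ × ℝ × ℝ | p.1 + p.2.1 + p.2.2 ≤ 0} ∩
          {p : ℝ × ℝ × ℝ | -p.2.2 ≤ 2 * p.2.1}, F ξ) := by
  have m1 : Measurable fun p : ℝ × ℝ × ℝ => p.1 := measurable_fst
  have m2 : Measurable fun p : ℝ × ℝ × ℝ => p.2.1 := measurable_fst.comp measurable_snd
  have m3 : Measurable fun p : ℝ × ℝ × ℝ => p.2.2 := measurable_snd.comp measurable_snd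
  set A : Set (ℝ × ℝ × ℝ) := {p | p.1 < p.2.1 ∧ p.2.1 < -p.2.2 / 2} with hA
  set B : Set (ℝ × ℝ × ℝ) := {p | p.1 < p.2.1} with hB
  set P : Set (ℝ × ℝ × ℝ) := {p | p.1 + p.2.1 + p.2.2 > 0} with hP
  set Q : Set (ℝ × ℝ × ℝ) :=
    {p : ℝ × ℝ × ℝ | p.1 + p.2.1 + p.2.2 ≤ 0} ∩ {p : ℝ × ℝ × ℝ | -p.2.2 ≤ 2 * p.2.1} with hQ
  have mB : MeasurableSet B := measurableSet_lt m1 m2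
  have mP : MeasurableSet P := measurableSet_lt measurable_const ((m1.add m2).add m3)
  have mQ : MeasurableSet Q :=
    (measurableSet_le ((m1.add m2).add m3) measurable_const).inter
      (measurableSet_le m3.neg (m2.const_mul 2))
  have mA : MeasurableSet A :=
    (measurableSet_lt m1 m2).inter (measurableSet_lt m2 (m3.neg.div_const 2))
  -- decomposition of B
  have hBdec : B = A ∪ ((B ∩ P) ∪ (Q ∩ B)) := by
    ext p
    simp only [hA, hB, hP, hQ, Set.mem_union, Set.mem_inter_iff, Set.mem_setOf_eq]
    constructor
    · intro h
      by_cases h2 : p.2.1 < -p.2.2 / 2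
      · exact Or.inl ⟨h, h2⟩
      · push_neg at h2
        by_cases h3 : 0 < p.1 + p.2.1 + p.2.2
        · exact Or.inr (Or.inl ⟨h, h3⟩)
        · push_neg at h3
          exact Or.inr (Or.inr ⟨⟨h3, by linarith⟩, h⟩)
    · rintro (⟨h, _⟩ | ⟨h, _⟩ | ⟨_, h⟩) <;> exact h
  have hd1 : Disjoint A ((B ∩ P) ∪ (Q ∩ B)) := by
    rw [Set.disjoint_left]
    rintro p ⟨hp1, hp2⟩ (⟨_, hp3⟩ | ⟨⟨hp3, hp4⟩, _⟩)
    · simp only [hA, hB, hP, Set.mem_setOf_eq] at *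
      linarith
    · simp only [hA, hQ, Set.mem_setOf_eq] at *
      linarith
  have hd2 : Disjoint (B ∩ P) (Q ∩ B) := by
    rw [Set.disjoint_left]
    rintro p ⟨_, hp1⟩ ⟨⟨hp2, _⟩, _⟩
    simp only [hP, Set.mem_setOf_eq] at *
    linarith
  have e1 : ∫ ξ in B, F ξ = (∫ ξ in A, F ξ) + ∫ ξ in (B ∩ P) ∪ (Q ∩ B), F ξ := by
    conv_lhs => rw [hBdec]
    exact setIntegral_union hd1 (((mB.inter mP).union (mQ.inter mB)))
      hF.integrableOn hF.integrableOn
  have e2 : (∫ ξ in (B ∩ P) ∪ (Q ∩ B), F ξ) = (∫ ξ in B ∩ P, F ξ) + ∫ ξ in Q ∩ B, F ξ :=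
    setIntegral_union hd2 (mQ.inter mB) hF.integrableOn hF.integrableOn
  have e3 : (∫ ξ in Q, F ξ) = ∫ ξ in Q ∩ B, F ξ := by
    apply setIntegral_congr_set
    rw [MeasureTheory.ae_eq_set]
    constructor
    · apply measure_mono_null _ C112_null_diag
      rintro p ⟨⟨hp1, hp2⟩, hp3⟩
      simp only [hB, Set.mem_inter_iff, Set.mem_setOf_eq, not_and, not_lt] at hp3
      have := hp3 ⟨hp1, hp2⟩
      simp only [hQ, Set.mem_setOf_eq] at hp1 hp2 ⊢
      linarith
    · simp [Set.diff_eq_empty.2 Set.inter_subset_left]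
  rw [e1, e2, e3]
  ring

/-- Frequency-side decomposition `C^{1,1,−2} = C^{1,1}·f₃ − H⁺(C^{1,1}(f₁,f₂)·f₃)
− H⁻(f₁·C^{−2,1}(f₃,f₂))`, as an identity of absolutely convergent integrals over
regions of `ℝ³`. -/
theorem C112_decomposition (f₁ f₂ f₃ : SchwartzMap ℝ ℂ) (x : ℝ) :
    (∫ ξ in {p : ℝ × ℝ × ℝ | p.1 < p.2.1 ∧ p.2.1 < -p.2.2 / 2},
        FourierTransform.fourier (⇑f₁ : ℝ → ℂ) ξ.1 * FourierTransform.fourier (⇑f₂ : ℝ → ℂ) ξ.2.1 *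
          FourierTransform.fourier (⇑f₃ : ℝ → ℂ) ξ.2.2 *
          Complex.exp ((2 : ℂ) * (Real.pi : ℂ) * Complex.I * (x : ℂ) *
            ((ξ.1 : ℂ) + (ξ.2.1 : ℂ) + (ξ.2.2 : ℂ)))) =
      (∫ ξ in {p : ℝ × ℝ × ℝ | p.1 < p.2.1},
          FourierTransform.fourier (⇑f₁ : ℝ → ℂ) ξ.1 * FourierTransform.fourier (⇑f₂ : ℝ → ℂ) ξ.2.1 *
            FourierTransform.fourier (⇑f₃ : ℝ → ℂ) ξ.2.2 *
            Complex.exp ((2 : ℂ) * (Real.pi : ℂ) * Complex.I * (x : ℂ) *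
              ((ξ.1 : ℂ) + (ξ.2.1 : ℂ) + (ξ.2.2 : ℂ)))) -
        (∫ ξ in {p : ℝ × ℝ × ℝ | p.1 < p.2.1} ∩
            {p : ℝ × ℝ × ℝ | p.1 + p.2.1 + p.2.2 > 0},
          FourierTransform.fourier (⇑f₁ : ℝ → ℂ) ξ.1 * FourierTransform.fourier (⇑f₂ : ℝ → ℂ) ξ.2.1 *
            FourierTransform.fourier (⇑f₃ : ℝ → ℂ) ξ.2.2 *
            Complex.exp ((2 : ℂ) * (Real.pi : ℂ) * Complex.I * (x : ℂ) *
              ((ξ.1 : ℂ) + (ξ.2.1 : ℂ) + (ξ.2.2 : ℂ)))) -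
        (∫ ξ in {p : ℝ × ℝ × ℝ | p.1 + p.2.1 + p.2.2 ≤ 0} ∩
            {p : ℝ × ℝ × ℝ | -p.2.2 ≤ 2 * p.2.1},
          FourierTransform.fourier (⇑f₁ : ℝ → ℂ) ξ.1 * FourierTransform.fourier (⇑f₂ : ℝ → ℂ) ξ.2.1 *
            FourierTransform.fourier (⇑f₃ : ℝ → ℂ) ξ.2.2 *
            Complex.exp ((2 : ℂ) * (Real.pi : ℂ) * Complex.I * (x : ℂ) *
              ((ξ.1 : ℂ) + (ξ.2.1 : ℂ) + (ξ.2.2 : ℂ)))) := by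
  apply C112_aux
  have hg : ∀ f : SchwartzMap ℝ ℂ, Integrable (FourierTransform.fourier ⇑f) ∧
      Continuous (FourierTransform.fourier ⇑f) := by
    intro f
    have : FourierTransform.fourier ⇑f = ⇑(FourierTransform.fourier f : SchwartzMap ℝ ℂ) := by
      rw [SchwartzMap.fourier_coe]
    rw [this]
    exact ⟨(FourierTransform.fourier f : SchwartzMap ℝ ℂ).integrable,
      (FourierTransform.fourier f : SchwartzMap ℝ ℂ).continuous⟩
  have h23 : Integrable (fun y : ℝ × ℝ =>
      FourierTransform.fourier (⇑f₂) y.1 * FourierTransform.fourier (⇑f₃) y.2) :=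
    (hg f₂).1.mul_prod (hg f₃).1
  have hG : Integrable (fun ξ : ℝ × ℝ × ℝ => FourierTransform.fourier (⇑f₁) ξ.1 *
      (FourierTransform.fourier (⇑f₂) ξ.2.1 * FourierTransform.fourier (⇑f₃) ξ.2.2)) :=
    (hg f₁).1.mul_prod h23
  have hFc : Continuous (fun ξ : ℝ × ℝ × ℝ =>
      FourierTransform.fourier (⇑f₁) ξ.1 * FourierTransform.fourier (⇑f₂) ξ.2.1 *
        FourierTransform.fourier (⇑f₃) ξ.2.2 *
        Complex.exp ((2 : ℂ) * (Real.pi : ℂ) * Complex.I * (x : ℂ) *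
          ((ξ.1 : ℂ) + (ξ.2.1 : ℂ) + (ξ.2.2 : ℂ)))) := by
    apply Continuous.mul
    · exact (((hg f₁).2.comp continuous_fst).mul
        ((hg f₂).2.comp (continuous_fst.comp continuous_snd))).mul
        ((hg f₃).2.comp (continuous_snd.comp continuous_snd))
    · exact Complex.continuous_exp.comp (continuous_const.mul
        (((Complex.continuous_ofReal.comp continuous_fst).add
          (Complex.continuous_ofReal.comp (continuous_fst.comp continuous_snd))).add
          (Complex.continuous_ofReal.comp (continuous_snd.comp continuous_snd))))
  refine hG.norm.mono' hFc.aestronglyMeasurable (Filter.Eventually.of_forall fun ξ => ?_)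
  have hz : (2 : ℂ) * (Real.pi : ℂ) * Complex.I * (x : ℂ) *
      ((ξ.1 : ℂ) + (ξ.2.1 : ℂ) + (ξ.2.2 : ℂ)) =
      ((2 * Real.pi * x * (ξ.1 + ξ.2.1 + ξ.2.2) : ℝ) : ℂ) * Complex.I := by
    push_cast; ring
  rw [norm_mul, hz, Complex.norm_exp_ofReal_mul_I, mul_one, mul_assoc]
end

section
/- For all Schwartz functions f₁,f₂,f₃,f₄ on ℝ and every x ∈ ℝ, ∫_{{ξ₁<ξ₂<ξ₃<−ξ₄/2}} ∏_{j=1}^{4} f̂ⱼ(ξⱼ) e^{2πix(ξ₁+ξ₂+ξ₃+ξ₄)} dξ = ∫_{{ξ₁<ξ₂<ξ₃}} ∏_{j=1}^{4} f̂ⱼ(ξⱼ) e^{2πix(ξ₁+ξ₂+ξ₃+ξ₄)} dξ − ∫_{{ξ₁<ξ₂<ξ₃} ∩ {ξ₂+ξ₃+ξ₄>0}} ∏_{j=1}^{4} f̂ⱼ(ξⱼ) e^{2πix(ξ₁+ξ₂+ξ₃+ξ₄)} dξ − ∫_{{ξ₁<ξ₂} ∩ {ξ₂<−(ξ₃+ξ₄)}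 ∩ {−ξ₄/2<ξ₃}} ∏_{j=1}^{4} f̂ⱼ(ξⱼ) e^{2πix(ξ₁+ξ₂+ξ₃+ξ₄)} dξ, all integrals taken over the indicated regions of ℝ⁴ with respect to Lebesgue measure. -/
open MeasureTheory

namespace C1112Aux

noncomputable instance : Measure.IsAddHaarMeasure (volume : Measure (ℝ × ℝ)) := by
  rw [Measure.volume_eq_prod]; exact Measure.prod.instIsAddHaarMeasure _ _

noncomputable instance : Measure.IsAddHaarMeasure (volume : Measure (ℝ × ℝ × ℝ)) := by
  rw [Measure.volume_eq_prod]; exact Measure.prod.instIsAddHaarMeasure _ _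

noncomputable instance : Measure.IsAddHaarMeasure (volume : Measure (ℝ × ℝ × ℝ × ℝ)) := by
  rw [Measure.volume_eq_prod]; exact Measure.prod.instIsAddHaarMeasure _ _

/-- A non-trivial linear functional has null kernel. -/
lemma ker_null (l : (ℝ × ℝ × ℝ × ℝ) →ₗ[ℝ] ℝ) (p₀ : ℝ × ℝ × ℝ × ℝ) (hp₀ : l p₀ ≠ 0) :
    volume {p : ℝ × ℝ × ℝ × ℝ | l p = 0} = 0 := by
  have : {p : ℝ × ℝ × ℝ × ℝ | l p = 0} = (LinearMap.ker l : Set (ℝ × ℝ × ℝ × ℝ)) := rfl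
  rw [this]
  refine Measure.addHaar_submodule volume _ fun h => hp₀ ?_
  have : p₀ ∈ LinearMap.ker l := h ▸ Submodule.mem_top
  exact this

/-- The sum-of-last-three-coordinates functional. -/
noncomputable def lsum : (ℝ × ℝ × ℝ × ℝ) →ₗ[ℝ] ℝ where
  toFun p := p.2.1 + p.2.2.1 + p.2.2.2
  map_add' p q := by simp; ring
  map_smul' c p := by simp; ring

/-- The `2ξ₃ + ξ₄` functional. -/
noncomputable def ltwo : (ℝ × ℝ × ℝ × ℝ) →ₗ[ℝ] ℝ where
  toFun p := 2 * p.2.2.1 + p.2.2.2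
  map_add' p q := by simp; ring
  map_smul' c p := by simp; ring

lemma norm_exp_two_pi_I (x ξ : ℝ) :
    ‖Complex.exp ((2 : ℂ) * (Real.pi : ℂ) * Complex.I * (x : ℂ) * (ξ : ℂ))‖ = 1 := by
  have : (2 : ℂ) * (Real.pi : ℂ) * Complex.I * (x : ℂ) * (ξ : ℂ)
      = ((2 * Real.pi * x * ξ : ℝ) : ℂ) * Complex.I := by push_cast; ring
  rw [this, Complex.norm_exp_ofReal_mul_I]

lemma integrable_hat_exp (f : SchwartzMap ℝ ℂ) (x : ℝ) :
    Integrable (fun ξ : ℝ => VectorFourier.fourierIntegral Real.fourierChar volume (innerₗ ℝ) (⇑f) ξ *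
      Complex.exp ((2 : ℂ) * (Real.pi : ℂ) * Complex.I * (x : ℂ) * (ξ : ℂ))) := by
  have hfi : Integrable (fun ξ : ℝ => VectorFourier.fourierIntegral Real.fourierChar volume (innerₗ ℝ) (⇑f) ξ) := by
    have : VectorFourier.fourierIntegral Real.fourierChar volume (innerₗ ℝ) (⇑f) = ⇑(SchwartzMap.fourierTransformCLM ℂ f) := rfl
    rw [this]; exact (SchwartzMap.fourierTransformCLM ℂ f).integrable
  have hc : Continuous fun ξ : ℝ => VectorFourier.fourierIntegral Real.fourierChar volume (innerₗ ℝ) (⇑f) ξ *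
      Complex.exp ((2 : ℂ) * (Real.pi : ℂ) * Complex.I * (x : ℂ) * (ξ : ℂ)) := by
    have : Continuous (VectorFourier.fourierIntegral Real.fourierChar volume (innerₗ ℝ) (⇑f)) :=
      (SchwartzMap.fourierTransformCLM ℂ f).continuous
    fun_prop
  refine hfi.norm.mono' hc.aestronglyMeasurable (ae_of_all _ fun ξ => ?_)
  rw [norm_mul, norm_exp_two_pi_I, mul_one]

end C1112Aux

open C1112Aux in
/-- Frequency-side decomposition of `C^{1,1,1,−2}` into `C^{1,1,1}(f₁,f₂,f₃)·f₄` minus the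
multiplier with symbol `1_{{ξ₁<ξ₂<ξ₃} ∩ {ξ₂+ξ₃+ξ₄>0}}` minus the frequency-side expression of
`C^{1,1,−1}(f₁,f₂,C^{−2,1}(f₄,f₃))`, as an identity of absolutely convergent integrals. -/
theorem C1112_decomposition (f₁ f₂ f₃ f₄ : SchwartzMap ℝ ℂ) (x : ℝ) :
    (∫ ξ in {p : ℝ × ℝ × ℝ × ℝ |
        p.1 < p.2.1 ∧ p.2.1 < p.2.2.1 ∧ p.2.2.1 < -p.2.2.2 / 2},
        VectorFourier.fourierIntegral Real.fourierChar volume (innerₗ ℝ) (⇑f₁) ξ.1 * VectorFourier.fourierIntegral Real.fourierChar volume (innerₗ ℝ) (⇑f₂) ξ.2.1 *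
          VectorFourier.fourierIntegral Real.fourierChar volume (innerₗ ℝ) (⇑f₃) ξ.2.2.1 * VectorFourier.fourierIntegral Real.fourierChar volume (innerₗ ℝ) (⇑f₄) ξ.2.2.2 *
          Complex.exp ((2 : ℂ) * (Real.pi : ℂ) * Complex.I * (x : ℂ) *
            ((ξ.1 : ℂ) + (ξ.2.1 : ℂ) + (ξ.2.2.1 : ℂ) + (ξ.2.2.2 : ℂ)))) =
      (∫ ξ in {p : ℝ × ℝ × ℝ × ℝ | p.1 < p.2.1 ∧ p.2.1 < p.2.2.1},
          VectorFourier.fourierIntegral Real.fourierChar volume (innerₗ ℝ) (⇑f₁) ξ.1 * VectorFourier.fourierIntegral Real.fourierChar volume (innerₗ ℝ) (⇑f₂) ξ.2.1 *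
            VectorFourier.fourierIntegral Real.fourierChar volume (innerₗ ℝ) (⇑f₃) ξ.2.2.1 * VectorFourier.fourierIntegral Real.fourierChar volume (innerₗ ℝ) (⇑f₄) ξ.2.2.2 *
            Complex.exp ((2 : ℂ) * (Real.pi : ℂ) * Complex.I * (x : ℂ) *
              ((ξ.1 : ℂ) + (ξ.2.1 : ℂ) + (ξ.2.2.1 : ℂ) + (ξ.2.2.2 : ℂ)))) -
        (∫ ξ in {p : ℝ × ℝ × ℝ × ℝ | p.1 < p.2.1 ∧ p.2.1 < p.2.2.1} ∩
            {p : ℝ × ℝ × ℝ × ℝ | p.2.1 + p.2.2.1 + p.2.2.2 > 0},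
          VectorFourier.fourierIntegral Real.fourierChar volume (innerₗ ℝ) (⇑f₁) ξ.1 * VectorFourier.fourierIntegral Real.fourierChar volume (innerₗ ℝ) (⇑f₂) ξ.2.1 *
            VectorFourier.fourierIntegral Real.fourierChar volume (innerₗ ℝ) (⇑f₃) ξ.2.2.1 * VectorFourier.fourierIntegral Real.fourierChar volume (innerₗ ℝ) (⇑f₄) ξ.2.2.2 *
            Complex.exp ((2 : ℂ) * (Real.pi : ℂ) * Complex.I * (x : ℂ) *
              ((ξ.1 : ℂ) + (ξ.2.1 : ℂ) + (ξ.2.2.1 : ℂ) + (ξ.2.2.2 : ℂ)))) -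
        (∫ ξ in {p : ℝ × ℝ × ℝ × ℝ | p.1 < p.2.1} ∩
            {p : ℝ × ℝ × ℝ × ℝ | p.2.1 < -(p.2.2.1 + p.2.2.2)} ∩
            {p : ℝ × ℝ × ℝ × ℝ | -p.2.2.2 / 2 < p.2.2.1},
          VectorFourier.fourierIntegral Real.fourierChar volume (innerₗ ℝ) (⇑f₁) ξ.1 * VectorFourier.fourierIntegral Real.fourierChar volume (innerₗ ℝ) (⇑f₂) ξ.2.1 *
            VectorFourier.fourierIntegral Real.fourierChar volume (innerₗ ℝ) (⇑f₃) ξ.2.2.1 * VectorFourier.fourierIntegral Real.fourierChar volume (innerₗ ℝ) (⇑f₄) ξ.2.2.2 *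
            Complex.exp ((2 : ℂ) * (Real.pi : ℂ) * Complex.I * (x : ℂ) *
              ((ξ.1 : ℂ) + (ξ.2.1 : ℂ) + (ξ.2.2.1 : ℂ) + (ξ.2.2.2 : ℂ)))) := by
  set F : ℝ × ℝ × ℝ × ℝ → ℂ := fun ξ =>
    VectorFourier.fourierIntegral Real.fourierChar volume (innerₗ ℝ) (⇑f₁) ξ.1 * VectorFourier.fourierIntegral Real.fourierChar volume (innerₗ ℝ) (⇑f₂) ξ.2.1 *
      VectorFourier.fourierIntegral Real.fourierChar volume (innerₗ ℝ) (⇑f₃) ξ.2.2.1 * VectorFourier.fourierIntegral Real.fourierChar volume (innerₗ ℝ) (⇑f₄) ξ.2.2.2 *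
      Complex.exp ((2 : ℂ) * (Real.pi : ℂ) * Complex.I * (x : ℂ) *
        ((ξ.1 : ℂ) + (ξ.2.1 : ℂ) + (ξ.2.2.1 : ℂ) + (ξ.2.2.2 : ℂ))) with hFdef
  set L : Set (ℝ × ℝ × ℝ × ℝ) :=
    {p | p.1 < p.2.1 ∧ p.2.1 < p.2.2.1 ∧ p.2.2.1 < -p.2.2.2 / 2} with hLdef
  set A : Set (ℝ × ℝ × ℝ × ℝ) := {p | p.1 < p.2.1 ∧ p.2.1 < p.2.2.1} with hAdef
  set S : Set (ℝ × ℝ × ℝ × ℝ) :=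
    {p : ℝ × ℝ × ℝ × ℝ | p.1 < p.2.1 ∧ p.2.1 < p.2.2.1} ∩
      {p : ℝ × ℝ × ℝ × ℝ | p.2.1 + p.2.2.1 + p.2.2.2 > 0} with hSdef
  set B : Set (ℝ × ℝ × ℝ × ℝ) :=
    {p : ℝ × ℝ × ℝ × ℝ | p.1 < p.2.1} ∩
      {p : ℝ × ℝ × ℝ × ℝ | p.2.1 < -(p.2.2.1 + p.2.2.2)} ∩
      {p : ℝ × ℝ × ℝ × ℝ | -p.2.2.2 / 2 < p.2.2.1} with hBdef
  -- global integrability of F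
  have g : ∀ f : SchwartzMap ℝ ℂ, Integrable (fun ξ : ℝ => VectorFourier.fourierIntegral Real.fourierChar volume (innerₗ ℝ) (⇑f) ξ *
      Complex.exp ((2 : ℂ) * (Real.pi : ℂ) * Complex.I * (x : ℂ) * (ξ : ℂ))) :=
    fun f => integrable_hat_exp f x
  have h34 : Integrable (fun q : ℝ × ℝ =>
      (VectorFourier.fourierIntegral Real.fourierChar volume (innerₗ ℝ) (⇑f₃) q.1 *
        Complex.exp ((2 : ℂ) * (Real.pi : ℂ) * Complex.I * (x : ℂ) * (q.1 : ℂ))) *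
      (VectorFourier.fourierIntegral Real.fourierChar volume (innerₗ ℝ) (⇑f₄) q.2 *
        Complex.exp ((2 : ℂ) * (Real.pi : ℂ) * Complex.I * (x : ℂ) * (q.2 : ℂ)))) := by
    rw [Measure.volume_eq_prod]; exact (g f₃).mul_prod (g f₄)
  have h234 : Integrable (fun q : ℝ × ℝ × ℝ =>
      (VectorFourier.fourierIntegral Real.fourierChar volume (innerₗ ℝ) (⇑f₂) q.1 *
        Complex.exp ((2 : ℂ) * (Real.pi : ℂ) * Complex.I * (x : ℂ) * (q.1 : ℂ))) *
      ((VectorFourier.fourierIntegral Real.fourierChar volume (innerₗ ℝ) (⇑f₃) q.2.1 *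
        Complex.exp ((2 : ℂ) * (Real.pi : ℂ) * Complex.I * (x : ℂ) * (q.2.1 : ℂ))) *
      (VectorFourier.fourierIntegral Real.fourierChar volume (innerₗ ℝ) (⇑f₄) q.2.2 *
        Complex.exp ((2 : ℂ) * (Real.pi : ℂ) * Complex.I * (x : ℂ) * (q.2.2 : ℂ))))) := by
    rw [Measure.volume_eq_prod]; exact (g f₂).mul_prod h34
  have h1234 : Integrable (fun q : ℝ × ℝ × ℝ × ℝ =>
      (VectorFourier.fourierIntegral Real.fourierChar volume (innerₗ ℝ) (⇑f₁) q.1 *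
        Complex.exp ((2 : ℂ) * (Real.pi : ℂ) * Complex.I * (x : ℂ) * (q.1 : ℂ))) *
      ((VectorFourier.fourierIntegral Real.fourierChar volume (innerₗ ℝ) (⇑f₂) q.2.1 *
        Complex.exp ((2 : ℂ) * (Real.pi : ℂ) * Complex.I * (x : ℂ) * (q.2.1 : ℂ))) *
      ((VectorFourier.fourierIntegral Real.fourierChar volume (innerₗ ℝ) (⇑f₃) q.2.2.1 *
        Complex.exp ((2 : ℂ) * (Real.pi : ℂ) * Complex.I * (x : ℂ) * (q.2.2.1 : ℂ))) *
      (VectorFourier.fourierIntegral Real.fourierChar volume (innerₗ ℝ) (⇑f₄) q.2.2.2 *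
        Complex.exp ((2 : ℂ) * (Real.pi : ℂ) * Complex.I * (x : ℂ) * (q.2.2.2 : ℂ)))))) := by
    rw [Measure.volume_eq_prod]; exact (g f₁).mul_prod h234
  have hF : Integrable F := by
    refine h1234.congr (ae_of_all _ fun p => ?_)
    simp only [hFdef]
    rw [show ((p.1 : ℂ) + (p.2.1 : ℂ) + (p.2.2.1 : ℂ) + (p.2.2.2 : ℂ)) =
      (p.1 : ℂ) + ((p.2.1 : ℂ) + ((p.2.2.1 : ℂ) + (p.2.2.2 : ℂ))) by ring]
    rw [mul_add, mul_add, mul_add, Complex.exp_add, Complex.exp_add, Complex.exp_add]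
    ring
  -- measurability of the pieces
  have mL : MeasurableSet L := by
    rw [hLdef]
    exact (measurableSet_lt measurable_fst (measurable_fst.comp measurable_snd)).inter
      ((measurableSet_lt (measurable_fst.comp measurable_snd)
        ((measurable_fst.comp measurable_snd).comp measurable_snd)).inter
      (measurableSet_lt ((measurable_fst.comp measurable_snd).comp measurable_snd)
        (((measurable_snd.comp measurable_snd).comp measurable_snd).neg.div_const 2)))
  have mS : MeasurableSet S := by
    rw [hSdef]
    exact ((measurableSet_lt measurable_fst (measurable_fst.comp measurable_snd)).inter
      (measurableSet_lt (measurable_fst.comp measurable_snd)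
        ((measurable_fst.comp measurable_snd).comp measurable_snd))).inter
      (measurableSet_lt measurable_const
        (((measurable_fst.comp measurable_snd).add
          ((measurable_fst.comp measurable_snd).comp measurable_snd)).add
          ((measurable_snd.comp measurable_snd).comp measurable_snd)))
  have mB : MeasurableSet B := by
    rw [hBdef]
    exact ((measurableSet_lt measurable_fst (measurable_fst.comp measurable_snd)).inter
      (measurableSet_lt (measurable_fst.comp measurable_snd)
        ((((measurable_fst.comp measurable_snd).comp measurable_snd).add
          ((measurable_snd.comp measurable_snd).comp measurable_snd)).neg))).inter
      (measurableSet_lt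
        ((((measurable_snd.comp measurable_snd).comp measurable_snd)).neg.div_const 2)
        ((measurable_fst.comp measurable_snd).comp measurable_snd))
  -- union covers A up to a null set
  have hnull : volume ({p : ℝ × ℝ × ℝ × ℝ | p.2.1 + p.2.2.1 + p.2.2.2 = 0} ∪
      {p : ℝ × ℝ × ℝ × ℝ | 2 * p.2.2.1 + p.2.2.2 = 0}) = 0 := by
    refine measure_union_null ?_ ?_
    · exact ker_null lsum (0, 1, 0, 0) (by norm_num [lsum])
    · exact ker_null ltwo (0, 0, 1, 0) (by norm_num [ltwo])
  have hsub : (L ∪ S) ∪ B ⊆ A := by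
    rintro p ((⟨h1, h2, h3⟩ | ⟨⟨ha, hb⟩, hs⟩) | ⟨⟨hb1, hb2⟩, hb3⟩)
    · exact ⟨h1, h2⟩
    · exact ⟨ha, hb⟩
    · simp only [hBdef, hAdef, Set.mem_setOf_eq] at *
      exact ⟨hb1, by linarith⟩
  have hAe : A =ᵐ[volume] ((L ∪ S) ∪ B : Set (ℝ × ℝ × ℝ × ℝ)) := by
    rw [MeasureTheory.ae_eq_set]
    constructor
    · refine measure_mono_null ?_ hnull
      intro p hp
      have hpA : p ∈ A := hp.1
      have hpU : p ∉ (L ∪ S) ∪ B := hp.2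
      have h1 : p.1 < p.2.1 := hpA.1
      have h2 : p.2.1 < p.2.2.1 := hpA.2
      simp only [Set.mem_union, Set.mem_setOf_eq]
      by_contra hN
      push_neg at hN
      obtain ⟨hN1, hN2⟩ := hN
      apply hpU
      rcases lt_trichotomy (2 * p.2.2.1 + p.2.2.2) 0 with ht | ht | ht
      · exact Or.inl (Or.inl ⟨h1, h2, by linarith⟩)
      · exact absurd ht hN2
      · rcases lt_trichotomy (p.2.1 + p.2.2.1 + p.2.2.2) 0 with hs | hs | hs
        · exact Or.inr ⟨⟨h1, show p.2.1 < -(p.2.2.1 + p.2.2.2) by linarith⟩,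
            show -p.2.2.2 / 2 < p.2.2.1 by linarith⟩
        · exact absurd hs hN1
        · exact Or.inl (Or.inr ⟨⟨h1, h2⟩, hs⟩)
    · rw [Set.diff_eq_empty.mpr hsub]; simp
  -- disjointness
  have dLS : Disjoint L S := by
    rw [Set.disjoint_left]
    rintro p ⟨_, _, h3⟩ ⟨⟨_, h2⟩, hs⟩
    simp only [hSdef, gt_iff_lt, Set.mem_setOf_eq] at hs h2 h3
    linarith
  have dLSB : Disjoint (L ∪ S) B := by
    rw [Set.disjoint_left]
    rintro p (⟨_, _, h3⟩ | ⟨⟨_, h2⟩, hs⟩) ⟨⟨_, hb2⟩, hb3⟩ <;>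
      simp only [Set.mem_setOf_eq, gt_iff_lt] at * <;> linarith
  -- put everything together
  have e1 : ∫ ξ in A, F ξ = ∫ ξ in (L ∪ S) ∪ B, F ξ := setIntegral_congr_set hAe
  have e2 : ∫ ξ in (L ∪ S) ∪ B, F ξ = (∫ ξ in L ∪ S, F ξ) + ∫ ξ in B, F ξ :=
    setIntegral_union dLSB mB hF.integrableOn hF.integrableOn
  have e3 : ∫ ξ in L ∪ S, F ξ = (∫ ξ in L, F ξ) + ∫ ξ in S, F ξ :=
    setIntegral_union dLS mS hF.integrableOn hF.integrableOn
  show ∫ ξ in L, F ξ = (∫ ξ in A, F ξ) - (∫ ξ in S, F ξ) - ∫ ξ in B, F ξ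
  rw [e1, e2, e3]; ring
end

section
/- For all Schwartz functions F, G, H on ℝ, ∫_ℝ ( ∫_{{(ξ₁,ξ₂)∈ℝ² : −ξ₁/2<ξ₂}} F̂(ξ₁) Ĝ(ξ₂) e^{2πix(ξ₁+ξ₂)} dξ₁dξ₂ ) · H(x) dx = ∫_ℝ ( ∫_{{(ξ₁,ξ₂)∈ℝ² : ξ₁<ξ₂}} Ĥ(ξ₁) Ĝ(ξ₂) e^{2πix(ξ₁+ξ₂)} dξ₁dξ₂ ) · F(x) dx. -/
open MeasureTheory

open scoped FourierTransform Real

section Aux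

private lemma norm_exp_aux (x s₁ s₂ : ℝ) :
    ‖Complex.exp ((2 : ℂ) * (Real.pi : ℂ) * Complex.I * (x : ℂ) * ((s₁ : ℂ) + (s₂ : ℂ)))‖ = 1 := by
  rw [Complex.norm_exp]
  norm_num [Complex.mul_re, Complex.mul_im]

private lemma inner_fourier (W : SchwartzMap ℝ ℂ) (s₁ s₂ : ℝ) :
    (∫ x : ℝ, Complex.exp ((2 : ℂ) * (Real.pi : ℂ) * Complex.I * (x : ℂ) *
        ((s₁ : ℂ) + (s₂ : ℂ))) * W x) = FourierTransform.fourier (⇑W) (-(s₁ + s₂)) := by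
  rw [Real.fourier_real_eq]
  congr 1; ext x
  rw [Circle.smul_def, Real.fourierChar_apply]
  congr 1; push_cast; ring

/-- Swap the `x` integral inside and compute it as a Fourier transform. -/
private lemma side_eq (A B W : SchwartzMap ℝ ℂ) {S : Set (ℝ × ℝ)} (hS : MeasurableSet S) :
    (∫ x : ℝ,
        (∫ ξ in S, A ξ.1 * B ξ.2 *
          Complex.exp ((2 : ℂ) * (Real.pi : ℂ) * Complex.I * (x : ℂ) *
            ((ξ.1 : ℂ) + (ξ.2 : ℂ)))) * W x) =
      ∫ ξ in S, A ξ.1 * B ξ.2 * FourierTransform.fourier (⇑W) (-(ξ.1 + ξ.2)) := by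
  have hint : Integrable
      (Function.uncurry fun (x : ℝ) (ξ : ℝ × ℝ) => A ξ.1 * B ξ.2 *
        Complex.exp ((2 : ℂ) * (Real.pi : ℂ) * Complex.I * (x : ℂ) *
          ((ξ.1 : ℂ) + (ξ.2 : ℂ))) * W x)
      (volume.prod (volume.restrict S)) := by
    have hAB : Integrable (fun ξ : ℝ × ℝ => ‖A ξ.1‖ * ‖B ξ.2‖) (volume : Measure (ℝ × ℝ)) := by
      rw [Measure.volume_eq_prod]
      exact A.integrable.norm.mul_prod B.integrable.norm
    have hg : Integrable (fun q : ℝ × (ℝ × ℝ) => ‖W q.1‖ * (‖A q.2.1‖ * ‖B q.2.2‖))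
        (volume.prod (volume.restrict S)) :=
      W.integrable.norm.mul_prod (hAB.restrict)
    refine hg.mono' ?_ ?_
    · apply Continuous.aestronglyMeasurable
      refine (((A.continuous.comp (continuous_fst.comp continuous_snd)).mul
        (B.continuous.comp (continuous_snd.comp continuous_snd))).mul
        (Complex.continuous_exp.comp ?_)).mul (W.continuous.comp continuous_fst)
      fun_prop
    · refine Filter.Eventually.of_forall fun q => ?_
      simp only [Function.uncurry, norm_mul, norm_exp_aux, mul_one]
      apply le_of_eq; ring
  calc
    (∫ x : ℝ,
        (∫ ξ in S, A ξ.1 * B ξ.2 *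
          Complex.exp ((2 : ℂ) * (Real.pi : ℂ) * Complex.I * (x : ℂ) *
            ((ξ.1 : ℂ) + (ξ.2 : ℂ)))) * W x)
      = ∫ x : ℝ, ∫ ξ in S, A ξ.1 * B ξ.2 *
          Complex.exp ((2 : ℂ) * (Real.pi : ℂ) * Complex.I * (x : ℂ) *
            ((ξ.1 : ℂ) + (ξ.2 : ℂ))) * W x := by
        simp_rw [← integral_mul_const]
    _ = ∫ ξ in S, ∫ x : ℝ, A ξ.1 * B ξ.2 *
          Complex.exp ((2 : ℂ) * (Real.pi : ℂ) * Complex.I * (x : ℂ) *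
            ((ξ.1 : ℂ) + (ξ.2 : ℂ))) * W x := integral_integral_swap hint
    _ = ∫ ξ in S, A ξ.1 * B ξ.2 * FourierTransform.fourier (⇑W) (-(ξ.1 + ξ.2)) := by
        refine setIntegral_congr_fun hS fun ξ _ => ?_
        rw [← inner_fourier W ξ.1 ξ.2]
        simp_rw [mul_assoc, integral_const_mul]

/-- Change of variables relating the two frequency regions. -/
private lemma region_eq (P Q R : SchwartzMap ℝ ℂ) :
    (∫ ξ in {p : ℝ × ℝ | -p.1 / 2 < p.2}, P ξ.1 * Q ξ.2 * R (-(ξ.1 + ξ.2))) =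
      ∫ ξ in {p : ℝ × ℝ | p.1 < p.2}, R ξ.1 * Q ξ.2 * P (-(ξ.1 + ξ.2)) := by
  have hS₁ : MeasurableSet {p : ℝ × ℝ | -p.1 / 2 < p.2} :=
    measurableSet_lt (by fun_prop) (by fun_prop)
  have hS₂ : MeasurableSet {p : ℝ × ℝ | p.1 < p.2} :=
    measurableSet_lt (by fun_prop) (by fun_prop)
  have hint : ∀ (U V X : SchwartzMap ℝ ℂ),
      Integrable (fun p : ℝ × ℝ => U p.1 * V p.2 * X (-(p.1 + p.2)))
        ((volume : Measure ℝ).prod volume) := by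
    intro U V X
    have h0 : Integrable (fun p : ℝ × ℝ => U p.1 * V p.2)
        ((volume : Measure ℝ).prod volume) := U.integrable.mul_prod V.integrable
    have h1 : Integrable (fun p : ℝ × ℝ => X (-(p.1 + p.2)) * (U p.1 * V p.2))
        ((volume : Measure ℝ).prod volume) := by
      refine h0.bdd_mul (c := (SchwartzMap.seminorm ℝ 0 0) X) ?_ ?_
      · exact (X.continuous.comp (by fun_prop)).aestronglyMeasurable
      · exact Filter.Eventually.of_forall fun p => X.norm_le_seminorm ℝ _
    exact h1.congr (Filter.Eventually.of_forall fun p => by ring)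
  have key : ∀ (g₁ g₂ : ℝ × ℝ → ℂ),
      (∀ ξ₂ η : ℝ, g₁ (-ξ₂ - η, ξ₂) = g₂ (η, ξ₂)) →
      Integrable g₁ ((volume : Measure ℝ).prod volume) →
      Integrable g₂ ((volume : Measure ℝ).prod volume) →
      (∫ ξ in {p : ℝ × ℝ | -p.1 / 2 < p.2}, g₁ ξ) = ∫ ξ in {p : ℝ × ℝ | p.1 < p.2}, g₂ ξ := by
    intro g₁ g₂ hcomp hg₁ hg₂
    rw [← integral_indicator hS₁, ← integral_indicator hS₂, Measure.volume_eq_prod,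
      integral_prod_symm _ (hg₁.indicator hS₁), integral_prod_symm _ (hg₂.indicator hS₂)]
    congr 1; ext ξ₂
    have e₁ : ∀ ξ₁ : ℝ, Set.indicator {p : ℝ × ℝ | -p.1 / 2 < p.2} g₁ (ξ₁, ξ₂) =
        Set.indicator (Set.Ioi (-(2 * ξ₂))) (fun t => g₁ (t, ξ₂)) ξ₁ := by
      intro ξ₁
      simp only [Set.indicator_apply, Set.mem_setOf_eq, Set.mem_Ioi]
      exact if_congr ⟨fun h => by linarith, fun h => by linarith⟩ rfl rfl
    have e₂ : ∀ ξ₁ : ℝ, Set.indicator {p : ℝ × ℝ | p.1 < p.2} g₂ (ξ₁, ξ₂) =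
        Set.indicator (Set.Iio ξ₂) (fun t => g₂ (t, ξ₂)) ξ₁ := by
      intro ξ₁
      simp only [Set.indicator_apply, Set.mem_setOf_eq, Set.mem_Iio]
    simp_rw [e₁, e₂]
    rw [integral_indicator measurableSet_Ioi, integral_indicator measurableSet_Iio]
    have himg : (fun η : ℝ => -ξ₂ - η) '' Set.Iio ξ₂ = Set.Ioi (-(2 * ξ₂)) := by
      ext t
      simp only [Set.mem_image, Set.mem_Iio, Set.mem_Ioi]
      constructor
      · rintro ⟨η, hη, rfl⟩; linarith
      · intro h; exact ⟨-ξ₂ - t, by linarith, by ring⟩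
    have hmp : MeasurePreserving (fun η : ℝ => -ξ₂ - η) volume volume := by
      have h1 : MeasurePreserving (fun t : ℝ => -t) volume volume :=
        Measure.measurePreserving_neg _
      have h2 : MeasurePreserving (fun t : ℝ => t + -ξ₂) volume volume :=
        measurePreserving_add_right _ (-ξ₂)
      have h := h2.comp h1
      convert h using 1
      ext t; simp [Function.comp]; ring
    have hemb : MeasurableEmbedding (fun η : ℝ => -ξ₂ - η) :=
      (MeasurableEquiv.subLeft (-ξ₂)).measurableEmbedding
    rw [← himg, hmp.setIntegral_image_emb hemb]
    exact setIntegral_congr_fun measurableSet_Iio fun η _ => hcomp ξ₂ η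
  refine key _ _ ?_ (hint P Q R) (hint R Q P)
  intro ξ₂ η
  show P (-ξ₂ - η) * Q ξ₂ * R (-(-ξ₂ - η + ξ₂)) = R η * Q ξ₂ * P (-(η + ξ₂))
  rw [congrArg P (show (-ξ₂ - η : ℝ) = -(η + ξ₂) by ring),
    congrArg R (show (-(-ξ₂ - η + ξ₂) : ℝ) = η by ring)]
  ring

end Aux

/-- Duality identity `∫ C^{−2,1}(F,G)·H = ∫ C^{1,1}(H,G)·F`. -/
theorem duality_C21_C11 (F G H : SchwartzMap ℝ ℂ) :
    (∫ x : ℝ,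
        (∫ ξ in {p : ℝ × ℝ | -p.1 / 2 < p.2},
          FourierTransform.fourier (⇑F : ℝ → ℂ) ξ.1 * FourierTransform.fourier (⇑G : ℝ → ℂ) ξ.2 *
            Complex.exp ((2 : ℂ) * (Real.pi : ℂ) * Complex.I * (x : ℂ) *
              ((ξ.1 : ℂ) + (ξ.2 : ℂ)))) * H x) =
      ∫ x : ℝ,
        (∫ ξ in {p : ℝ × ℝ | p.1 < p.2},
          FourierTransform.fourier (⇑H : ℝ → ℂ) ξ.1 * FourierTransform.fourier (⇑G : ℝ → ℂ) ξ.2 *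
            Complex.exp ((2 : ℂ) * (Real.pi : ℂ) * Complex.I * (x : ℂ) *
              ((ξ.1 : ℂ) + (ξ.2 : ℂ)))) * F x := by
  have hS₁ : MeasurableSet {p : ℝ × ℝ | -p.1 / 2 < p.2} :=
    measurableSet_lt (by fun_prop) (by fun_prop)
  have hS₂ : MeasurableSet {p : ℝ × ℝ | p.1 < p.2} :=
    measurableSet_lt (by fun_prop) (by fun_prop)
  have hF : FourierTransform.fourier (⇑F) = ⇑(SchwartzMap.fourierTransformCLM ℂ F) :=
    congrArg (fun f : SchwartzMap ℝ ℂ => (f : ℝ → ℂ)) (SchwartzMap.fourierTransformCLM_apply ℂ F).symm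
  have hG : FourierTransform.fourier (⇑G) = ⇑(SchwartzMap.fourierTransformCLM ℂ G) :=
    congrArg (fun f : SchwartzMap ℝ ℂ => (f : ℝ → ℂ)) (SchwartzMap.fourierTransformCLM_apply ℂ G).symm
  have hH : FourierTransform.fourier (⇑H) = ⇑(SchwartzMap.fourierTransformCLM ℂ H) :=
    congrArg (fun f : SchwartzMap ℝ ℂ => (f : ℝ → ℂ)) (SchwartzMap.fourierTransformCLM_apply ℂ H).symm
  rw [hF, hG, hH]
  rw [side_eq _ _ H hS₁, side_eq _ _ F hS₂, hF, hH]
  exact region_eq _ _ _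
end

section
/- For all Schwartz functions f₁,f₂,f₃,f₄ on ℝ, ∫_ℝ ( ∫_{{(ξ₁,ξ₂,ξ₄)∈ℝ³ : ξ₁+ξ₂+ξ₄≤0 and −ξ₄/2<ξ₂}} f̂₁(ξ₁) f̂₂(ξ₂) f̂₄(ξ₄) e^{2πix(ξ₁+ξ₂+ξ₄)} dξ₁dξ₂dξ₄ ) · f₃(x) dx = ∫_ℝ ( ∫_{{(ξ₁,ξ₂,ξ₃)∈ℝ³ : ξ₁+ξ₃<ξ₂ and 0<ξ₃}} f̂₁(ξ₁) f̂₂(ξ₂) f̂₃(ξ₃) e^{2πix(ξ₁+ξ₂+ξ₃)} dξ₁dξ₂dξ₃ ) · f₄(x) dx. -/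
open MeasureTheory

namespace DualityAux

noncomputable section

instance : (volume : Measure (ℝ × ℝ × ℝ)).IsAddHaarMeasure :=
  Measure.prod.instIsAddHaarMeasure _ _

/-- The involution `(ξ₁,ξ₂,ξ₃) ↦ (ξ₁,ξ₂,−(ξ₁+ξ₂+ξ₃))`. -/
def T : ℝ × ℝ × ℝ → ℝ × ℝ × ℝ := fun p => (p.1, p.2.1, -(p.1 + p.2.1 + p.2.2))

lemma T_invol : Function.Involutive T := by
  rintro ⟨a, b, c⟩
  simp only [T, Prod.mk.injEq, true_and]
  ring

lemma T_meas : Measurable T := by unfold T; fun_prop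

def Te : (ℝ × ℝ × ℝ) ≃ᵐ (ℝ × ℝ × ℝ) where
  toEquiv := Function.Involutive.toPerm T T_invol
  measurable_toFun := T_meas
  measurable_invFun := T_meas

lemma measurePreserving_sub_left' (d : ℝ) :
    MeasurePreserving (fun x : ℝ => d - x) volume volume := by
  have h := (measurePreserving_add_left (volume : Measure ℝ) d).comp
    (Measure.measurePreserving_neg (volume : Measure ℝ))
  simpa [Function.comp_def, sub_eq_add_neg] using h

lemma measurePreserving_T : MeasurePreserving T volume volume := by
  have hG : ∀ a : ℝ, MeasurePreserving (fun q : ℝ × ℝ => (q.1, -(a + q.1 + q.2)))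
      (volume : Measure (ℝ × ℝ)) volume := by
    intro a
    have h := (MeasurePreserving.id (volume : Measure ℝ)).skew_product
      (g := fun b c => (-(a + b)) - c)
      (by fun_prop)
      (Filter.Eventually.of_forall fun b => (measurePreserving_sub_left' (-(a + b))).map_eq)
    have hfun : (fun p : ℝ × ℝ => (id p.1, (-(a + p.1)) - p.2))
        = fun q : ℝ × ℝ => (q.1, -(a + q.1 + q.2)) := by
      funext q
      simp only [id_eq, Prod.mk.injEq, true_and]
      ring
    rw [hfun] at h
    exact h
  have h := (MeasurePreserving.id (volume : Measure ℝ)).skew_product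
    (g := fun a (q : ℝ × ℝ) => (q.1, -(a + q.1 + q.2)))
    (by fun_prop)
    (Filter.Eventually.of_forall fun a => (hG a).map_eq)
  have hfun : (fun p : ℝ × (ℝ × ℝ) => (id p.1, (p.2.1, -(p.1 + p.2.1 + p.2.2)))) = T := by
    funext p; rfl
  rw [hfun] at h
  exact h

lemma null_plane : volume {p : ℝ × ℝ × ℝ | p.1 + p.2.1 + p.2.2 = 0} = 0 := by
  let L : (ℝ × ℝ × ℝ) →ₗ[ℝ] ℝ :=
    { toFun := fun p => p.1 + p.2.1 + p.2.2
      map_add' := by intro p q; simp [Prod.fst_add, Prod.snd_add]; ring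
      map_smul' := by intro c p; simp [Prod.smul_fst, Prod.smul_snd, smul_eq_mul]; ring }
  have hker : {p : ℝ × ℝ × ℝ | p.1 + p.2.1 + p.2.2 = 0} = (LinearMap.ker L : Set (ℝ × ℝ × ℝ)) := by
    ext p; simp [LinearMap.mem_ker, L]
  rw [hker]
  refine Measure.addHaar_submodule volume _ ?_
  intro htop
  have h1 : ((1 : ℝ), (0 : ℝ), (0 : ℝ)) ∈ LinearMap.ker L := by
    rw [htop]; trivial
  simp [LinearMap.mem_ker, L] at h1

lemma ae_ne_plane : ∀ᵐ ξ : ℝ × ℝ × ℝ, ξ.1 + ξ.2.1 + ξ.2.2 ≠ 0 := by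
  rw [ae_iff]
  simpa using null_plane

lemma fourier_eval (f : SchwartzMap ℝ ℂ) (σ : ℝ) :
    ∫ x : ℝ, Complex.exp ((2 : ℂ) * (Real.pi : ℂ) * Complex.I * (x : ℂ) * (σ : ℂ)) * f x
      = FourierTransform.fourier (⇑f : ℝ → ℂ) (-σ) := by
  rw [Real.fourier_real_eq]
  refine integral_congr_ae (Filter.Eventually.of_forall fun x => ?_)
  simp only [Circle.smul_def, Real.fourierChar_apply]
  congr 1
  push_cast
  ring

lemma exp_norm_one (x : ℝ) (ξ : ℝ × ℝ × ℝ) :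
    ‖Complex.exp ((2 : ℂ) * (Real.pi : ℂ) * Complex.I * (x : ℂ) *
      ((ξ.1 : ℂ) + (ξ.2.1 : ℂ) + (ξ.2.2 : ℂ)))‖ = 1 := by
  have : (2 : ℂ) * (Real.pi : ℂ) * Complex.I * (x : ℂ) *
      ((ξ.1 : ℂ) + (ξ.2.1 : ℂ) + (ξ.2.2 : ℂ))
      = ((2 * Real.pi * x * (ξ.1 + ξ.2.1 + ξ.2.2) : ℝ) : ℂ) * Complex.I := by
    push_cast; ring
  rw [this, Complex.norm_exp_ofReal_mul_I]

lemma integrable_triple (g₁ g₂ g₃ : SchwartzMap ℝ ℂ) :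
    Integrable (fun ξ : ℝ × ℝ × ℝ => g₁ ξ.1 * g₂ ξ.2.1 * g₃ ξ.2.2) volume := by
  have h := (g₁.integrable (μ := volume)).mul_prod
    ((g₂.integrable (μ := volume)).mul_prod (g₃.integrable (μ := volume)))
  simpa [mul_assoc, Measure.volume_eq_prod] using h

lemma swap_eval (g₁ g₂ g₃ f : SchwartzMap ℝ ℂ) {S : Set (ℝ × ℝ × ℝ)} (hS : MeasurableSet S) :
    (∫ x : ℝ, (∫ ξ in S, g₁ ξ.1 * g₂ ξ.2.1 * g₃ ξ.2.2 *
        Complex.exp ((2 : ℂ) * (Real.pi : ℂ) * Complex.I * (x : ℂ) *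
          ((ξ.1 : ℂ) + (ξ.2.1 : ℂ) + (ξ.2.2 : ℂ)))) * f x)
      = ∫ ξ in S, g₁ ξ.1 * g₂ ξ.2.1 * g₃ ξ.2.2 *
          FourierTransform.fourier (⇑f : ℝ → ℂ) (-(ξ.1 + ξ.2.1 + ξ.2.2)) := by
  have hInt : Integrable (Function.uncurry fun (x : ℝ) (ξ : ℝ × ℝ × ℝ) =>
      (g₁ ξ.1 * g₂ ξ.2.1 * g₃ ξ.2.2 *
        Complex.exp ((2 : ℂ) * (Real.pi : ℂ) * Complex.I * (x : ℂ) *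
          ((ξ.1 : ℂ) + (ξ.2.1 : ℂ) + (ξ.2.2 : ℂ)))) * f x)
      (volume.prod (volume.restrict S)) := by
    refine Integrable.mono'
      ((f.integrable (μ := volume)).norm.mul_prod
        ((integrable_triple g₁ g₂ g₃).norm.restrict (s := S)))
      ?_ ?_
    · apply Continuous.aestronglyMeasurable
      apply Continuous.mul
      · apply Continuous.mul
        · fun_prop
        · apply Complex.continuous_exp.comp
          fun_prop
      · fun_prop
    · refine Filter.Eventually.of_forall fun z => ?_
      rw [Function.uncurry]
      rw [norm_mul, norm_mul, exp_norm_one, mul_one, mul_comm]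
  calc
    (∫ x : ℝ, (∫ ξ in S, g₁ ξ.1 * g₂ ξ.2.1 * g₃ ξ.2.2 *
        Complex.exp ((2 : ℂ) * (Real.pi : ℂ) * Complex.I * (x : ℂ) *
          ((ξ.1 : ℂ) + (ξ.2.1 : ℂ) + (ξ.2.2 : ℂ)))) * f x)
        = ∫ x : ℝ, ∫ ξ in S, (g₁ ξ.1 * g₂ ξ.2.1 * g₃ ξ.2.2 *
            Complex.exp ((2 : ℂ) * (Real.pi : ℂ) * Complex.I * (x : ℂ) *
              ((ξ.1 : ℂ) + (ξ.2.1 : ℂ) + (ξ.2.2 : ℂ)))) * f x := by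
      refine integral_congr_ae (Filter.Eventually.of_forall fun x => ?_)
      exact (integral_mul_const (f x) _).symm
    _ = ∫ ξ in S, ∫ x : ℝ, (g₁ ξ.1 * g₂ ξ.2.1 * g₃ ξ.2.2 *
            Complex.exp ((2 : ℂ) * (Real.pi : ℂ) * Complex.I * (x : ℂ) *
              ((ξ.1 : ℂ) + (ξ.2.1 : ℂ) + (ξ.2.2 : ℂ)))) * f x := by
      exact integral_integral_swap hInt
    _ = ∫ ξ in S, g₁ ξ.1 * g₂ ξ.2.1 * g₃ ξ.2.2 *
          FourierTransform.fourier (⇑f : ℝ → ℂ) (-(ξ.1 + ξ.2.1 + ξ.2.2)) := by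
      refine setIntegral_congr_fun hS fun ξ _ => ?_
      have h1 : ∀ x : ℝ, (g₁ ξ.1 * g₂ ξ.2.1 * g₃ ξ.2.2 *
          Complex.exp ((2 : ℂ) * (Real.pi : ℂ) * Complex.I * (x : ℂ) *
            ((ξ.1 : ℂ) + (ξ.2.1 : ℂ) + (ξ.2.2 : ℂ)))) * f x
          = (g₁ ξ.1 * g₂ ξ.2.1 * g₃ ξ.2.2) *
            (Complex.exp ((2 : ℂ) * (Real.pi : ℂ) * Complex.I * (x : ℂ) *
              (((ξ.1 + ξ.2.1 + ξ.2.2 : ℝ) : ℂ))) * f x) := by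
        intro x
        rw [mul_assoc]
        congr 3
        push_cast
        ring
      simp_rw [h1]
      rw [integral_const_mul, fourier_eval f (ξ.1 + ξ.2.1 + ξ.2.2)]

lemma transfer (u₁ u₂ u₃ u₄ : SchwartzMap ℝ ℂ) :
    (∫ ξ in {p : ℝ × ℝ × ℝ | p.1 + p.2.1 + p.2.2 ≤ 0 ∧ -p.2.2 / 2 < p.2.1},
        u₁ ξ.1 * u₂ ξ.2.1 * u₄ ξ.2.2 * u₃ (-(ξ.1 + ξ.2.1 + ξ.2.2)))
      = ∫ ξ in {p : ℝ × ℝ × ℝ | p.1 + p.2.2 < p.2.1 ∧ 0 < p.2.2},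
          u₁ ξ.1 * u₂ ξ.2.1 * u₃ ξ.2.2 * u₄ (-(ξ.1 + ξ.2.1 + ξ.2.2)) := by
  have hA : MeasurableSet {p : ℝ × ℝ × ℝ | p.1 + p.2.1 + p.2.2 ≤ 0 ∧ -p.2.2 / 2 < p.2.1} := by
    have m1 : Measurable fun p : ℝ × ℝ × ℝ => p.1 + p.2.1 + p.2.2 := by fun_prop
    have m2 : Measurable fun p : ℝ × ℝ × ℝ => -p.2.2 / 2 := by fun_prop
    have m3 : Measurable fun p : ℝ × ℝ × ℝ => p.2.1 := by fun_prop
    exact (measurableSet_le m1 measurable_const).inter (measurableSet_lt m2 m3)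
  have hB : MeasurableSet {p : ℝ × ℝ × ℝ | p.1 + p.2.2 < p.2.1 ∧ 0 < p.2.2} := by
    have m1 : Measurable fun p : ℝ × ℝ × ℝ => p.1 + p.2.2 := by fun_prop
    have m2 : Measurable fun p : ℝ × ℝ × ℝ => p.2.1 := by fun_prop
    have m3 : Measurable fun p : ℝ × ℝ × ℝ => p.2.2 := by fun_prop
    exact (measurableSet_lt m1 m2).inter (measurableSet_lt measurable_const m3)
  rw [← integral_indicator hA, ← integral_indicator hB]
  rw [← measurePreserving_T.integral_comp Te.measurableEmbedding
    ({p : ℝ × ℝ × ℝ | p.1 + p.2.2 < p.2.1 ∧ 0 < p.2.2}.indicator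
      (fun ξ => u₁ ξ.1 * u₂ ξ.2.1 * u₃ ξ.2.2 * u₄ (-(ξ.1 + ξ.2.1 + ξ.2.2))))]
  refine integral_congr_ae ?_
  filter_upwards [ae_ne_plane] with ξ hξ
  by_cases hmem : ξ ∈ {p : ℝ × ℝ × ℝ | p.1 + p.2.1 + p.2.2 ≤ 0 ∧ -p.2.2 / 2 < p.2.1}
  · have hσ : ξ.1 + ξ.2.1 + ξ.2.2 < 0 := lt_of_le_of_ne hmem.1 hξ
    have hmem' : T ξ ∈ {p : ℝ × ℝ × ℝ | p.1 + p.2.2 < p.2.1 ∧ 0 < p.2.2} := by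
      simp only [T, Set.mem_setOf_eq]
      constructor
      · have := hmem.2
        linarith [hmem.2]
      · linarith
    rw [Set.indicator_of_mem hmem, Set.indicator_of_mem hmem']
    simp only [T]
    rw [show -(ξ.1 + ξ.2.1 + -(ξ.1 + ξ.2.1 + ξ.2.2)) = ξ.2.2 by ring]
    ring
  · have hmem' : T ξ ∉ {p : ℝ × ℝ × ℝ | p.1 + p.2.2 < p.2.1 ∧ 0 < p.2.2} := by
      intro hc
      simp only [T, Set.mem_setOf_eq] at hc
      apply hmem
      simp only [Set.mem_setOf_eq]
      constructor
      · linarith [hc.2]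
      · linarith [hc.1]
    rw [Set.indicator_of_notMem hmem, Set.indicator_of_notMem hmem']

end

end DualityAux

open DualityAux

/-- Duality identity `∫ H⁻(f₁·C^{−2,1}(f₄,f₂))·f₃ = ∫ C^{1,1}(f₁·H⁺(f₃),f₂)·f₄`,
written entirely on the frequency side. -/
theorem duality_third_term (f₁ f₂ f₃ f₄ : SchwartzMap ℝ ℂ) :
    (∫ x : ℝ,
        (∫ ξ in {p : ℝ × ℝ × ℝ |
            p.1 + p.2.1 + p.2.2 ≤ 0 ∧ -p.2.2 / 2 < p.2.1},
          FourierTransform.fourier (⇑f₁ : ℝ → ℂ) ξ.1 * FourierTransform.fourier (⇑f₂ : ℝ → ℂ) ξ.2.1 *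
            FourierTransform.fourier (⇑f₄ : ℝ → ℂ) ξ.2.2 *
            Complex.exp ((2 : ℂ) * (Real.pi : ℂ) * Complex.I * (x : ℂ) *
              ((ξ.1 : ℂ) + (ξ.2.1 : ℂ) + (ξ.2.2 : ℂ)))) * f₃ x) =
      ∫ x : ℝ,
        (∫ ξ in {p : ℝ × ℝ × ℝ | p.1 + p.2.2 < p.2.1 ∧ 0 < p.2.2},
          FourierTransform.fourier (⇑f₁ : ℝ → ℂ) ξ.1 * FourierTransform.fourier (⇑f₂ : ℝ → ℂ) ξ.2.1 *
            FourierTransform.fourier (⇑f₃ : ℝ → ℂ) ξ.2.2 *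
            Complex.exp ((2 : ℂ) * (Real.pi : ℂ) * Complex.I * (x : ℂ) *
              ((ξ.1 : ℂ) + (ξ.2.1 : ℂ) + (ξ.2.2 : ℂ)))) * f₄ x := by
  have hA : MeasurableSet {p : ℝ × ℝ × ℝ | p.1 + p.2.1 + p.2.2 ≤ 0 ∧ -p.2.2 / 2 < p.2.1} := by
    have m1 : Measurable fun p : ℝ × ℝ × ℝ => p.1 + p.2.1 + p.2.2 := by fun_prop
    have m2 : Measurable fun p : ℝ × ℝ × ℝ => -p.2.2 / 2 := by fun_prop
    have m3 : Measurable fun p : ℝ × ℝ × ℝ => p.2.1 := by fun_prop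
    exact (measurableSet_le m1 measurable_const).inter (measurableSet_lt m2 m3)
  have hB : MeasurableSet {p : ℝ × ℝ × ℝ | p.1 + p.2.2 < p.2.1 ∧ 0 < p.2.2} := by
    have m1 : Measurable fun p : ℝ × ℝ × ℝ => p.1 + p.2.2 := by fun_prop
    have m2 : Measurable fun p : ℝ × ℝ × ℝ => p.2.1 := by fun_prop
    have m3 : Measurable fun p : ℝ × ℝ × ℝ => p.2.2 := by fun_prop
    exact (measurableSet_lt m1 m2).inter (measurableSet_lt measurable_const m3)
  simp only [← SchwartzMap.fourier_coe]
  rw [swap_eval _ _ _ _ hA, swap_eval _ _ _ _ hB]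
  simp only [← SchwartzMap.fourier_coe]
  exact transfer (SchwartzMap.fourierTransformCLM ℂ f₁) (SchwartzMap.fourierTransformCLM ℂ f₂)
    (SchwartzMap.fourierTransformCLM ℂ f₃) (SchwartzMap.fourierTransformCLM ℂ f₄)
end
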